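/- arXiv:2603.16097 — 2 statements merged into one kernel-verified Lean document; each statement's English description precedes it below -/
import Mathlib

section
/- Geometric comparison of twisted rectangles with parallelohedra: let e₁,…,e_m be unit vectors in ℝⁿ (m ≥ n) such that any n of them are linearly independent, and for r ∈ (ℝ₊)^m define the twisted rectangle R(x,r) = {x + λ₁e₁ + ⋯ + λ_m e_m : |λ_j| < r_j}. If r_{l₁},…,r_{l_n} are the n largest among r₁,…,r_m and R_𝔩(x,r) := {x + Σ_j λ_{l_j} e_{l_j} : |λ_{l_j}| < r_{l_j}}, then there is a constant γ̃₀ ∈ (0,1), depending only on e₁,…,e_m, such that R_𝔩(x,r) ⊂ R(x,r) ⊂ R_𝔩(x, γ̃₀⁻¹ r) for all x ∈ ℝⁿ. -/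
open MeasureTheory

/-- The twisted rectangle `R(x,r) = {x + Σ λ_j e_j : |λ_j| < r_j}`. -/
def twistedRect {n m : ℕ} (e : Fin m → EuclideanSpace ℝ (Fin n))
    (x : EuclideanSpace ℝ (Fin n)) (r : Fin m → ℝ) : Set (EuclideanSpace ℝ (Fin n)) :=
  {y | ∃ lam : Fin m → ℝ, (∀ j, |lam j| < r j) ∧ y = x + ∑ j, lam j • e j}

/-- The parallelohedron `R_𝔩(x,r) = {x + Σ_{j<n} λ_j e_{l_j} : |λ_j| < r_{l_j}}`. -/
def subRect {n m : ℕ} (e : Fin m → EuclideanSpace ℝ (Fin n)) (l : Fin n → Fin m)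
    (x : EuclideanSpace ℝ (Fin n)) (r : Fin m → ℝ) : Set (EuclideanSpace ℝ (Fin n)) :=
  {y | ∃ lam : Fin n → ℝ, (∀ j, |lam j| < r (l j)) ∧ y = x + ∑ j, lam j • e (l j)}

open Classical in
/-- Coefficient of `e μ` in the basis `e ∘ l` (when that family is independent). -/
noncomputable def trCoeff {n m : ℕ} (e : Fin m → EuclideanSpace ℝ (Fin n))
    (l : Fin n → Fin m) (μ : Fin m) (j : Fin n) : ℝ :=
  if h : LinearIndependent ℝ (e ∘ l) then
    ((Module.Basis.mk h (h.span_eq_top_of_card_eq_finrank' (by simp)).ge).repr (e μ)) j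
  else 0

lemma trCoeff_spec {n m : ℕ} (e : Fin m → EuclideanSpace ℝ (Fin n))
    (l : Fin n → Fin m) (h : LinearIndependent ℝ (e ∘ l)) (μ : Fin m) :
    e μ = ∑ j, trCoeff e l μ j • e (l j) := by
  classical
  set b := Module.Basis.mk h (h.span_eq_top_of_card_eq_finrank' (by simp)).ge with hb
  have hbj : ∀ j, b j = e (l j) := by
    intro j
    rw [hb, Module.Basis.coe_mk]
    rfl
  have hs := b.sum_repr (e μ)
  simp only [hbj] at hs
  rw [← hs]
  apply Finset.sum_congr rfl
  intro j _
  congr 1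
  simp only [trCoeff, dif_pos h, hb]

/-- Geometric comparison of twisted rectangles with parallelohedra:
there is `γ̃₀ ∈ (0,1)`, depending only on `e₁,…,e_m`, with
`R_𝔩(x,r) ⊆ R(x,r) ⊆ R_𝔩(x, γ̃₀⁻¹ r)` whenever `r_{l₁},…,r_{l_n}` are the `n`
largest entries of `r`. -/
theorem twistedRect_subRect_comparison {n m : ℕ} (hnm : n ≤ m)
    (e : Fin m → EuclideanSpace ℝ (Fin n))
    (hunit : ∀ j, ‖e j‖ = 1)
    (hindep : ∀ s : Finset (Fin m), s.card = n →
      LinearIndependent ℝ (fun i : s => e i)) :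
    ∃ γ ∈ Set.Ioo (0 : ℝ) 1,
      ∀ (r : Fin m → ℝ), (∀ j, 0 < r j) →
      ∀ (l : Fin n → Fin m), Function.Injective l →
        (∀ (j : Fin n) (μ : Fin m), μ ∉ Set.range l → r μ ≤ r (l j)) →
      ∀ x : EuclideanSpace ℝ (Fin n),
        subRect e l x r ⊆ twistedRect e x r ∧
        twistedRect e x r ⊆ subRect e l x (fun i => γ⁻¹ * r i) := by
  classical
  set A : ℝ := ∑ l : Fin n → Fin m, ∑ μ : Fin m, ∑ j : Fin n, |trCoeff e l μ j| with hA
  have hA0 : 0 ≤ A := by positivity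
  refine ⟨(2 + A)⁻¹, ⟨by positivity, inv_lt_one_of_one_lt₀ (by linarith)⟩, ?_⟩
  intro r hr l hl hmax x
  set t : Finset (Fin m) := Finset.univ.image l with ht
  have hmemt : ∀ μ, μ ∈ t ↔ μ ∈ Set.range l := by
    intro μ; simp [ht, Set.mem_range, eq_comm]
  have htc : t.card = n := by
    rw [ht, Finset.card_image_of_injective _ hl, Finset.card_univ, Fintype.card_fin]
  have hli : LinearIndependent ℝ (e ∘ l) := by
    have h1 := hindep t htc
    have hg : Function.Injective (fun j : Fin n => (⟨l j, (hmemt (l j)).2 ⟨j, rfl⟩⟩ : t)) := by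
      intro a b hab
      exact hl (congrArg Subtype.val hab)
    exact h1.comp _ hg
  constructor
  · rintro y ⟨lam, hlam, rfl⟩
    refine ⟨Function.extend l lam 0, ?_, ?_⟩
    · intro μ
      by_cases hμ : μ ∈ Set.range l
      · obtain ⟨j, rfl⟩ := hμ
        rw [hl.extend_apply]
        exact hlam j
      · rw [Function.extend_apply' _ _ _ (by simpa [Set.mem_range] using hμ)]
        simpa using hr μ
    · congr 1
      rw [← Finset.sum_subset (Finset.subset_univ t)
        (by
          intro μ _ hμ
          rw [Function.extend_apply' _ _ _ (by simpa [Set.mem_range, hmemt μ] using hμ)]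
          simp)]
      rw [ht, Finset.sum_image (fun a _ b _ hab => hl hab)]
      apply Finset.sum_congr rfl
      intro j _
      rw [hl.extend_apply]
  · rintro y ⟨lam, hlam, rfl⟩
    refine ⟨fun j => lam (l j) + ∑ μ ∈ tᶜ, lam μ * trCoeff e l μ j, ?_, ?_⟩
    · intro j
      have hAj : ∑ μ ∈ tᶜ, |trCoeff e l μ j| ≤ A := by
        calc ∑ μ ∈ tᶜ, |trCoeff e l μ j|
            ≤ ∑ μ : Fin m, |trCoeff e l μ j| :=
              Finset.sum_le_sum_of_subset_of_nonneg (Finset.subset_univ _)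
                (fun _ _ _ => abs_nonneg _)
          _ ≤ ∑ μ : Fin m, ∑ j' : Fin n, |trCoeff e l μ j'| :=
              Finset.sum_le_sum (fun μ _ =>
                Finset.single_le_sum (f := fun j' => |trCoeff e l μ j'|) (fun j' _ => abs_nonneg _) (Finset.mem_univ j))
          _ ≤ A :=
              Finset.single_le_sum (f := fun l' => ∑ μ : Fin m, ∑ j' : Fin n, |trCoeff e l' μ j'|)
                (fun l' _ => by positivity) (Finset.mem_univ l)
      have hbound : ∀ μ ∈ tᶜ, |lam μ * trCoeff e l μ j| ≤ r (l j) * |trCoeff e l μ j| := by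
        intro μ hμ
        rw [abs_mul]
        have hμ' : μ ∉ Set.range l := by
          rw [← hmemt]; simpa using hμ
        exact mul_le_mul_of_nonneg_right
          ((hlam μ).le.trans (hmax j μ hμ')) (abs_nonneg _)
      calc |lam (l j) + ∑ μ ∈ tᶜ, lam μ * trCoeff e l μ j|
          ≤ |lam (l j)| + |∑ μ ∈ tᶜ, lam μ * trCoeff e l μ j| := abs_add_le _ _
        _ ≤ |lam (l j)| + ∑ μ ∈ tᶜ, |lam μ * trCoeff e l μ j| :=
            add_le_add le_rfl (Finset.abs_sum_le_sum_abs _ _)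
        _ ≤ |lam (l j)| + ∑ μ ∈ tᶜ, r (l j) * |trCoeff e l μ j| :=
            add_le_add le_rfl (Finset.sum_le_sum hbound)
        _ = |lam (l j)| + r (l j) * ∑ μ ∈ tᶜ, |trCoeff e l μ j| := by
            rw [Finset.mul_sum]
        _ ≤ |lam (l j)| + r (l j) * A :=
            add_le_add le_rfl (mul_le_mul_of_nonneg_left hAj (hr (l j)).le)
        _ < ((2 + A)⁻¹)⁻¹ * r (l j) := by
            rw [inv_inv]
            have h1 := hlam (l j); have h2 := hr (l j)
            nlinarith
    · congr 1
      rw [← Finset.sum_add_sum_compl t (fun μ => lam μ • e μ)]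
      have h1 : ∑ μ ∈ t, lam μ • e μ = ∑ j, lam (l j) • e (l j) := by
        rw [ht, Finset.sum_image (fun a _ b _ hab => hl hab)]
      have h2 : ∑ μ ∈ tᶜ, lam μ • e μ
          = ∑ j, (∑ μ ∈ tᶜ, lam μ * trCoeff e l μ j) • e (l j) := by
        calc ∑ μ ∈ tᶜ, lam μ • e μ
            = ∑ μ ∈ tᶜ, ∑ j, (lam μ * trCoeff e l μ j) • e (l j) := by
              apply Finset.sum_congr rfl
              intro μ _
              rw [trCoeff_spec e l hli μ, Finset.smul_sum]
              simp [smul_smul]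
          _ = ∑ j, ∑ μ ∈ tᶜ, (lam μ * trCoeff e l μ j) • e (l j) := Finset.sum_comm
          _ = ∑ j, (∑ μ ∈ tᶜ, lam μ * trCoeff e l μ j) • e (l j) := by
              apply Finset.sum_congr rfl
              intro j _
              rw [Finset.sum_smul]
      rw [h1, h2, ← Finset.sum_add_distrib]
      apply Finset.sum_congr rfl
      intro j _
      rw [add_smul]
end

section
/- Volume comparability of twisted rectangles: with e₁,…,e_m unit vectors in ℝⁿ (any n linearly independent), and for r ∈ (ℝ₊)^m with r_{l₁},…,r_{l_n} the n largest entries, the Lebesgue measure of the twisted rectangle satisfies |R(x,r)| ≍ r_{l₁} ⋯ r_{l_n} · |det(e_{l₁},…,e_{l_n})|, with implicit constants depending only on e₁,…,e_m. -/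
open MeasureTheory

set_option maxHeartbeats 1000000

/-- Volume comparability of twisted rectangles:
`|R(x,r)| ≍ r_{l₁} ⋯ r_{l_n} · |det(e_{l₁},…,e_{l_n})|` when
`r_{l₁},…,r_{l_n}` are the `n` largest entries of `r`, with constants
depending only on `e₁,…,e_m`. -/
theorem twistedRect_volume_comparison {n m : ℕ} (hnm : n ≤ m)
    (e : Fin m → EuclideanSpace ℝ (Fin n))
    (hunit : ∀ j, ‖e j‖ = 1)
    (hindep : ∀ s : Finset (Fin m), s.card = n →
      LinearIndependent ℝ (fun i : s => e i)) :
    ∃ c C : ℝ, 0 < c ∧ 0 < C ∧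
      ∀ (r : Fin m → ℝ), (∀ j, 0 < r j) →
      ∀ (l : Fin n → Fin m), Function.Injective l →
        (∀ (j : Fin n) (μ : Fin m), μ ∉ Set.range l → r μ ≤ r (l j)) →
      ∀ x : EuclideanSpace ℝ (Fin n),
        ENNReal.ofReal (c * (∏ j, r (l j)) * |(Matrix.of fun i j => e (l j) i).det|)
          ≤ volume (twistedRect e x r) ∧
        volume (twistedRect e x r)
          ≤ ENNReal.ofReal (C * (∏ j, r (l j)) * |(Matrix.of fun i j => e (l j) i).det|) := by
  classical
  -- a basis attached to each choice of n of the vectors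
  have hB : ∀ l : Fin n ↪ Fin m, ∃ B : Module.Basis (Fin n) ℝ (EuclideanSpace ℝ (Fin n)),
      ∀ j, B j = e (l j) := by
    intro l
    have hcard : (Finset.image l Finset.univ).card = n := by
      rw [Finset.card_image_of_injective _ l.injective, Finset.card_univ, Fintype.card_fin]
    have hli := hindep _ hcard
    have hg : Function.Injective
        (fun j : Fin n => (⟨l j, by simp⟩ : (Finset.image l Finset.univ : Finset (Fin m)))) := by
      intro a b hab
      exact l.injective (congrArg Subtype.val hab)
    have hli2 : LinearIndependent ℝ (fun j : Fin n => e (l j)) := hli.comp _ hg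
    have hc : Fintype.card (Fin n) = Module.finrank ℝ (EuclideanSpace ℝ (Fin n)) := by
      simp [finrank_euclideanSpace_fin]
    rcases Nat.eq_zero_or_pos n with hn | hn
    · subst hn
      haveI : Subsingleton (EuclideanSpace ℝ (Fin 0)) :=
        ⟨fun a b => by ext i; exact i.elim0⟩
      exact ⟨Module.Basis.empty _, fun j => j.elim0⟩
    · haveI : Nonempty (Fin n) := ⟨⟨0, hn⟩⟩
      exact ⟨basisOfLinearIndependentOfCardEqFinrank hli2 hc,
        fun j => by simp [coe_basisOfLinearIndependentOfCardEqFinrank]⟩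
  choose B hBe using hB
  -- a uniform bound on all representation coefficients
  set K : ℝ := 1 + ∑ l : Fin n ↪ Fin m, ∑ μ, ∑ j, |(B l).repr (e μ) j| with hKdef
  have hK1 : (1 : ℝ) ≤ K := by
    rw [hKdef]
    have : (0:ℝ) ≤ ∑ l : Fin n ↪ Fin m, ∑ μ, ∑ j, |(B l).repr (e μ) j| :=
      Finset.sum_nonneg fun _ _ => Finset.sum_nonneg fun _ _ =>
        Finset.sum_nonneg fun _ _ => abs_nonneg _
    linarith
  have hKb : ∀ (l : Fin n ↪ Fin m) (μ : Fin m) (j : Fin n), |(B l).repr (e μ) j| ≤ K := by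
    intro l μ j
    have h1 : |(B l).repr (e μ) j| ≤ ∑ j, |(B l).repr (e μ) j| :=
      Finset.single_le_sum (f := fun j => |(B l).repr (e μ) j|)
        (fun _ _ => abs_nonneg _) (Finset.mem_univ j)
    have h2 : ∑ j, |(B l).repr (e μ) j| ≤ ∑ μ, ∑ j, |(B l).repr (e μ) j| :=
      Finset.single_le_sum
        (f := fun μ => ∑ j, |(B l).repr (e μ) j|)
        (fun _ _ => Finset.sum_nonneg fun _ _ => abs_nonneg _) (Finset.mem_univ μ)
    have h3 : ∑ μ, ∑ j, |(B l).repr (e μ) j|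
        ≤ ∑ l : Fin n ↪ Fin m, ∑ μ, ∑ j, |(B l).repr (e μ) j| :=
      Finset.single_le_sum
        (f := fun l => ∑ μ, ∑ j, |(B l).repr (e μ) j|)
        (fun _ _ => Finset.sum_nonneg fun _ _ => Finset.sum_nonneg fun _ _ => abs_nonneg _)
        (Finset.mem_univ l)
    rw [hKdef]; linarith
  have hK0 : (0 : ℝ) < K := lt_of_lt_of_le one_pos hK1
  have hA1 : (1 : ℝ) ≤ (↑m + 1) * K := by
    have hm : (0 : ℝ) ≤ (m : ℝ) := Nat.cast_nonneg m
    nlinarith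
  refine ⟨2 ^ n, (2 * ((↑m + 1) * K)) ^ n, by positivity, by positivity, ?_⟩
  intro r hr l hl hmax x
  set le : Fin n ↪ Fin m := ⟨l, hl⟩ with hle
  have hBe' : ∀ j, B le j = e (l j) := hBe le
  set M : Matrix (Fin n) (Fin n) ℝ := Matrix.of fun i j => e (l j) i with hM
  set T : EuclideanSpace ℝ (Fin n) →ₗ[ℝ] EuclideanSpace ℝ (Fin n) :=
    Matrix.toEuclideanLin M with hTdef
  have hdet : LinearMap.det T = M.det := by
    rw [hTdef, Matrix.toEuclideanLin_eq_toLin]; exact LinearMap.det_toLin _ _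
  have hTb : ∀ j : Fin n, T (PiLp.basisFun 2 ℝ (Fin n) j) = e (l j) := by
    intro j
    rw [hTdef, PiLp.basisFun_apply, ← PiLp.toLp_single, Matrix.toEuclideanLin_apply_piLp_toLp]
    have : Matrix.mulVec M (Pi.single j 1) = fun i => e (l j) i := by
      funext i
      simp [hM, Matrix.mulVec, dotProduct, Pi.single_apply]
    rw [this]
  have hT : ∀ v : EuclideanSpace ℝ (Fin n), T v = ∑ j, v j • e (l j) := by
    intro v
    have hv : v = ∑ j, v j • (PiLp.basisFun 2 ℝ (Fin n)) j := by
      have h := (PiLp.basisFun 2 ℝ (Fin n)).sum_repr v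
      simp only [PiLp.basisFun_repr] at h
      exact h.symm
    conv_lhs => rw [hv]
    rw [map_sum]
    refine Finset.sum_congr rfl fun j _ => ?_
    rw [T.map_smul, hTb]
  -- translation invariance
  have htrans : volume (twistedRect e x r) = volume (twistedRect e 0 r) := by
    have hset : twistedRect e x r = (fun y => -x + y) ⁻¹' (twistedRect e 0 r) := by
      ext y
      simp only [twistedRect, Set.mem_setOf_eq, Set.mem_preimage, zero_add]
      constructor
      · rintro ⟨lam, h1, rfl⟩; exact ⟨lam, h1, by abel⟩
      · rintro ⟨lam, h1, h2⟩
        refine ⟨lam, h1, ?_⟩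
        have : x + (-x + y) = x + ∑ j, lam j • e j := by rw [h2]
        simpa using this
    rw [hset, measure_preimage_add]
  -- boxes
  set Bo : Set (EuclideanSpace ℝ (Fin n)) := (MeasurableEquiv.toLp 2 (Fin n → ℝ)).symm ⁻¹'
      (Set.pi Set.univ fun j => Set.Ioo (-(r (l j))) (r (l j))) with hBoDef
  set Bc : Set (EuclideanSpace ℝ (Fin n)) := (MeasurableEquiv.toLp 2 (Fin n → ℝ)).symm ⁻¹'
      (Set.pi Set.univ fun j => Set.Icc (-((↑m + 1) * K * r (l j))) ((↑m + 1) * K * r (l j)))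
      with hBcDef
  have hmemo : ∀ v : EuclideanSpace ℝ (Fin n), v ∈ Bo ↔ ∀ j, |v j| < r (l j) := by
    intro v
    rw [hBoDef]
    simp [Set.mem_pi, abs_lt]
  have hmemc : ∀ v : EuclideanSpace ℝ (Fin n),
      v ∈ Bc ↔ ∀ j, |v j| ≤ (↑m + 1) * K * r (l j) := by
    intro v
    rw [hBcDef]
    simp [Set.mem_pi, abs_le, Pi.le_def, forall_and]
  have hBoVol : volume Bo = ENNReal.ofReal (2 ^ n * ∏ j, r (l j)) := by
    rw [hBoDef, (EuclideanSpace.volume_preserving_symm_measurableEquiv_toLp (Fin n)).measure_preimage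
      (MeasurableSet.univ_pi fun j => measurableSet_Ioo).nullMeasurableSet, volume_pi_pi]
    have h1 : ∀ j : Fin n, volume (Set.Ioo (-(r (l j))) (r (l j)))
        = ENNReal.ofReal (2 * r (l j)) := by
      intro j; rw [Real.volume_Ioo]; congr 1; ring
    simp_rw [h1]
    rw [← ENNReal.ofReal_prod_of_nonneg (fun j _ => by nlinarith [hr (l j)])]
    congr 1
    rw [Finset.prod_mul_distrib, Finset.prod_const, Finset.card_univ, Fintype.card_fin]
  have hBcVol : volume Bc
      = ENNReal.ofReal ((2 * ((↑m + 1) * K)) ^ n * ∏ j, r (l j)) := by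
    rw [hBcDef, (EuclideanSpace.volume_preserving_symm_measurableEquiv_toLp (Fin n)).measure_preimage
      (MeasurableSet.univ_pi fun j => measurableSet_Icc).nullMeasurableSet, volume_pi_pi]
    have h1 : ∀ j : Fin n, volume (Set.Icc (-((↑m + 1) * K * r (l j))) ((↑m + 1) * K * r (l j)))
        = ENNReal.ofReal (2 * ((↑m + 1) * K) * r (l j)) := by
      intro j; rw [Real.volume_Icc]; congr 1; ring
    simp_rw [h1]
    rw [← ENNReal.ofReal_prod_of_nonneg (fun j _ => by nlinarith [hr (l j), hK0])]
    congr 1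
    rw [Finset.prod_mul_distrib, Finset.prod_const, Finset.card_univ, Fintype.card_fin]
  -- lower bound: the inscribed parallelepiped
  have hsub1 : T '' Bo ⊆ twistedRect e 0 r := by
    rintro _ ⟨v, hv, rfl⟩
    have hv' : ∀ j, |v j| < r (l j) := (hmemo v).1 hv
    refine ⟨fun μ => ∑ j, if l j = μ then v j else 0, ?_, ?_⟩
    · intro μ
      by_cases hμ : ∃ j, l j = μ
      · obtain ⟨j0, rfl⟩ := hμ
        show |∑ j, if l j = l j0 then v j else 0| < r (l j0)
        rw [Finset.sum_eq_single j0 (fun b _ hb => if_neg fun h => hb (hl h)) (by simp)]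
        simpa using hv' j0
      · push_neg at hμ
        simpa [hμ] using hr μ
    · rw [hT v, zero_add]
      calc ∑ j, v j • e (l j)
          = ∑ j, ∑ μ, (if l j = μ then v j else 0) • e μ := by
            refine Finset.sum_congr rfl fun j _ => ?_
            simp [ite_smul]
        _ = ∑ μ, ∑ j, (if l j = μ then v j else 0) • e μ := Finset.sum_comm
        _ = ∑ μ, (∑ j, if l j = μ then v j else 0) • e μ := by
            refine Finset.sum_congr rfl fun μ _ => ?_
            rw [Finset.sum_smul]
  -- upper bound: the circumscribed parallelepiped
  have hsub2 : twistedRect e 0 r ⊆ T '' Bc := by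
    rintro y ⟨lam, hlam, rfl⟩
    set w : EuclideanSpace ℝ (Fin n) :=
      (WithLp.equiv 2 (Fin n → ℝ)).symm (fun j => ∑ μ, lam μ * (B le).repr (e μ) j) with hw
    have hwj : ∀ j, w j = ∑ μ, lam μ * (B le).repr (e μ) j := fun j => rfl
    have hrepr : ∀ (j' j : Fin n), (B le).repr (e (l j')) j = if j' = j then 1 else 0 := by
      intro j' j
      rw [← hBe', Module.Basis.repr_self, Finsupp.single_apply]
    refine ⟨w, ?_, ?_⟩
    · rw [hmemc]
      intro j
      have h1 : |w j| ≤ ∑ μ, |lam μ| * |(B le).repr (e μ) j| := by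
        rw [hwj]
        exact (Finset.abs_sum_le_sum_abs _ _).trans (le_of_eq (by simp [abs_mul]))
      set s : Finset (Fin m) := Finset.image l Finset.univ with hs
      have hsplit : ∑ μ, |lam μ| * |(B le).repr (e μ) j|
          = (∑ μ ∈ s, |lam μ| * |(B le).repr (e μ) j|)
            + ∑ μ ∈ sᶜ, |lam μ| * |(B le).repr (e μ) j| :=
        (Finset.sum_add_sum_compl s _).symm
      have h2 : ∑ μ ∈ s, |lam μ| * |(B le).repr (e μ) j| = |lam (l j)| := by
        rw [hs, Finset.sum_image (fun a _ b _ h => hl h)]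
        simp only [hrepr]
        simp [apply_ite, Finset.sum_ite_eq']
      have h3 : ∑ μ ∈ sᶜ, |lam μ| * |(B le).repr (e μ) j| ≤ ↑m * (r (l j) * K) := by
        have hbd : ∀ μ ∈ sᶜ, |lam μ| * |(B le).repr (e μ) j| ≤ r (l j) * K := by
          intro μ hμ
          have hnr : μ ∉ Set.range l := by
            rintro ⟨j', rfl⟩
            exact (Finset.mem_compl.1 hμ)
              (by rw [hs]; exact Finset.mem_image_of_mem l (Finset.mem_univ j'))
          have hr1 : |lam μ| ≤ r (l j) := (hlam μ).le.trans (hmax j μ hnr)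
          exact mul_le_mul hr1 (hKb le μ j) (abs_nonneg _) (hr (l j)).le
        calc ∑ μ ∈ sᶜ, |lam μ| * |(B le).repr (e μ) j|
            ≤ ∑ _μ ∈ sᶜ, r (l j) * K := Finset.sum_le_sum hbd
          _ = (sᶜ.card : ℝ) * (r (l j) * K) := by rw [Finset.sum_const, nsmul_eq_mul]
          _ ≤ ↑m * (r (l j) * K) := by
              have : (sᶜ.card : ℝ) ≤ m := by
                exact_mod_cast (Finset.card_le_univ _).trans_eq (by simp)
              have h0 : (0:ℝ) ≤ r (l j) * K := by nlinarith [hr (l j), hK0]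
              nlinarith
      have h4 : |lam (l j)| ≤ r (l j) := (hlam (l j)).le
      have h5 : (0:ℝ) < r (l j) := hr (l j)
      calc |w j| ≤ |lam (l j)| + ↑m * (r (l j) * K) := by rw [hsplit] at h1; linarith
        _ ≤ (↑m + 1) * K * r (l j) := by nlinarith
    · rw [hT w, zero_add]
      calc ∑ j, w j • e (l j)
          = ∑ j, ∑ μ, (lam μ * (B le).repr (e μ) j) • e (l j) := by
            refine Finset.sum_congr rfl fun j _ => ?_
            rw [hwj, Finset.sum_smul]
        _ = ∑ μ, ∑ j, (lam μ * (B le).repr (e μ) j) • e (l j) := Finset.sum_comm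
        _ = ∑ μ, lam μ • e μ := by
            refine Finset.sum_congr rfl fun μ _ => ?_
            simp_rw [mul_smul, ← Finset.smul_sum]
            congr 1
            simp_rw [← hBe']
            exact (B le).sum_repr (e μ)
  constructor
  · calc ENNReal.ofReal (2 ^ n * (∏ j, r (l j)) * |M.det|)
        = volume (T '' Bo) := by
          rw [Measure.addHaar_image_linearMap, hdet, hBoVol,
            ← ENNReal.ofReal_mul (abs_nonneg _)]
          congr 1; ring
      _ ≤ volume (twistedRect e 0 r) := measure_mono hsub1
      _ = volume (twistedRect e x r) := htrans.symm
  · calc volume (twistedRect e x r) = volume (twistedRect e 0 r) := htrans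
      _ ≤ volume (T '' Bc) := measure_mono hsub2
      _ = ENNReal.ofReal ((2 * ((↑m + 1) * K)) ^ n * (∏ j, r (l j)) * |M.det|) := by
          rw [Measure.addHaar_image_linearMap, hdet, hBcVol,
            ← ENNReal.ofReal_mul (abs_nonneg _)]
          congr 1; ring
end
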